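/- arXiv:2107.10416 — 3 statements merged into one kernel-verified Lean document; each statement's English description precedes it below -/
import Mathlib

section
/- Let Γ be the set of finite subsets of ℕ and define λ_σ = ∏_{k∈σ}(1+k) (with λ_∅ = 1). Then for every real r > 1, the series ∑_{σ∈Γ} λ_σ^{-r} converges and satisfies ∑_{σ∈Γ} λ_σ^{-r} ≤ exp(∑_{n=1}^∞ n^{-r}). -/
open scoped BigOperators

/-- `lam σ = ∏_{k∈σ} (1+k)`, with `lam ∅ = 1`. -/
noncomputable def lam (σ : Finset ℕ) : ℝ := ∏ k ∈ σ, (1 + k : ℝ)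

/-- For every real `r > 1`, the series `∑_{σ∈Γ} λ_σ^{-r}` over the finite power set `Γ`
of `ℕ` converges, and its sum is at most `exp (∑_{n=1}^∞ n^{-r})`. -/
theorem stmt0 (r : ℝ) (hr : 1 < r) :
    Summable (fun σ : Finset ℕ => lam σ ^ (-r)) ∧
    (∑' σ : Finset ℕ, lam σ ^ (-r)) ≤ Real.exp (∑' n : ℕ, ((n : ℝ) + 1) ^ (-r)) := by
  set g : ℕ → ℝ := fun n => ((n : ℝ) + 1) ^ (-r) with hgdef
  have hg0 : ∀ n, 0 ≤ g n := fun n => Real.rpow_nonneg (by positivity) _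
  have hgsum : Summable g := by
    have h1 : Summable (fun n : ℕ => (n : ℝ) ^ (-r)) :=
      Real.summable_nat_rpow.mpr (by linarith)
    have h2 := (summable_nat_add_iff 1).mpr h1
    refine h2.congr fun n => ?_
    simp [hgdef]
  have hf : ∀ σ : Finset ℕ, lam σ ^ (-r) = ∏ k ∈ σ, g k := by
    intro σ
    rw [lam, ← Real.finset_prod_rpow σ _ (fun k _ => by positivity) (-r)]
    exact Finset.prod_congr rfl fun k _ => by rw [add_comm]
  have hf0 : ∀ σ : Finset ℕ, 0 ≤ lam σ ^ (-r) := fun σ => by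
    rw [hf]; exact Finset.prod_nonneg fun k _ => hg0 k
  have key : ∀ u : Finset (Finset ℕ),
      ∑ σ ∈ u, lam σ ^ (-r) ≤ Real.exp (∑' n, g n) := by
    intro u
    set S := u.sup id with hS
    have hsub : u ⊆ S.powerset := fun σ hσ =>
      Finset.mem_powerset.mpr (Finset.le_sup (f := id) hσ)
    calc ∑ σ ∈ u, lam σ ^ (-r)
        ≤ ∑ σ ∈ S.powerset, lam σ ^ (-r) :=
          Finset.sum_le_sum_of_subset_of_nonneg hsub (fun σ _ _ => hf0 σ)
      _ = ∏ k ∈ S, (g k + 1) := by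
          rw [Finset.prod_add]
          refine (Finset.sum_congr rfl fun σ hσ => ?_).symm
          rw [hf]; simp
      _ ≤ ∏ k ∈ S, Real.exp (g k) :=
          Finset.prod_le_prod (fun k _ => by positivity)
            (fun k _ => by linarith [Real.add_one_le_exp (g k)])
      _ = Real.exp (∑ k ∈ S, g k) := (Real.exp_sum S g).symm
      _ ≤ Real.exp (∑' n, g n) :=
          Real.exp_le_exp.mpr (Summable.sum_le_tsum S (fun i _ => hg0 i) hgsum)
  have hsum : Summable (fun σ : Finset ℕ => lam σ ^ (-r)) :=
    summable_of_sum_le hf0 key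
  exact ⟨hsum, Summable.tsum_le_of_sum_le hsum key⟩
end

section
/- Let T: S → S* be a continuous linear operator whose 2D-Fock transform satisfies |⟨⟨T e_σ, e_τ⟩⟩| ≤ C λ_σ^p λ_τ^p for all σ, τ ∈ Γ, for some constants C ≥ 0 and p ≥ 0. Then for every q > p + 1/2 there is a unique bounded linear operator T̃: S_q → S_q* extending T with operator norm ‖T̃‖ ≤ C · ∑_{σ∈Γ} λ_σ^{-2(q-p)}. -/
open scoped BigOperators
open scoped ENNReal

lemma one_le_lam (σ : Finset ℕ) : 1 ≤ lam σ := by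
  rw [lam]
  calc (1:ℝ) = ∏ _k ∈ σ, (1:ℝ) := (Finset.prod_const_one).symm
    _ ≤ ∏ k ∈ σ, (1 + k : ℝ) :=
      Finset.prod_le_prod (fun i _ => zero_le_one)
        (fun i _ => le_add_of_nonneg_right (Nat.cast_nonneg i))

lemma lam_pos (σ : Finset ℕ) : 0 < lam σ := lt_of_lt_of_le one_pos (one_le_lam σ)

/-- Cauchy–Schwarz for tsums of nonneg reals. -/
lemma cs_tsum {ι : Type*} {f g : ι → ℝ} (hf0 : ∀ i, 0 ≤ f i) (hg0 : ∀ i, 0 ≤ g i)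
    (hf : Summable fun i => f i ^ 2) (hg : Summable fun i => g i ^ 2) :
    Summable (fun i => f i * g i) ∧
      ∑' i, f i * g i ≤ Real.sqrt (∑' i, f i ^ 2) * Real.sqrt (∑' i, g i ^ 2) := by
  have hsum : Summable (fun i => f i * g i) :=
    Summable.of_nonneg_of_le (fun i => mul_nonneg (hf0 i) (hg0 i))
      (fun i => by nlinarith [sq_nonneg (f i - g i)]) ((hf.add hg).div_const 2)
  refine ⟨hsum, Summable.tsum_le_of_sum_le hsum fun u => ?_⟩
  have h1 : (∑ i ∈ u, f i * g i) ^ 2 ≤ (∑ i ∈ u, f i ^ 2) * ∑ i ∈ u, g i ^ 2 :=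
    Finset.sum_mul_sq_le_sq_mul_sq u f g
  have h2 : ∑ i ∈ u, f i ^ 2 ≤ ∑' i, f i ^ 2 := Summable.sum_le_tsum u (fun i _ => sq_nonneg _) hf
  have h3 : ∑ i ∈ u, g i ^ 2 ≤ ∑' i, g i ^ 2 := Summable.sum_le_tsum u (fun i _ => sq_nonneg _) hg
  have hfs : (0:ℝ) ≤ ∑ i ∈ u, f i ^ 2 := Finset.sum_nonneg fun i _ => sq_nonneg _
  have hgs : (0:ℝ) ≤ ∑ i ∈ u, g i ^ 2 := Finset.sum_nonneg fun i _ => sq_nonneg _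
  have h0 : (0:ℝ) ≤ ∑ i ∈ u, f i * g i :=
    Finset.sum_nonneg fun i _ => mul_nonneg (hf0 i) (hg0 i)
  calc ∑ i ∈ u, f i * g i = Real.sqrt ((∑ i ∈ u, f i * g i) ^ 2) := (Real.sqrt_sq h0).symm
    _ ≤ Real.sqrt ((∑ i ∈ u, f i ^ 2) * ∑ i ∈ u, g i ^ 2) := Real.sqrt_le_sqrt h1
    _ = Real.sqrt (∑ i ∈ u, f i ^ 2) * Real.sqrt (∑ i ∈ u, g i ^ 2) := Real.sqrt_mul hfs _
    _ ≤ _ :=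
        mul_le_mul (Real.sqrt_le_sqrt h2) (Real.sqrt_le_sqrt h3)
          (Real.sqrt_nonneg _) (Real.sqrt_nonneg _)

lemma summable_lam_rpow {s : ℝ} (hs : 1 < s) :
    Summable (fun σ : Finset ℕ => lam σ ^ (-s)) := by
  have hg : Summable (fun k : ℕ => ((1:ℝ) + k) ^ (-s)) := by
    have h0 : Summable (fun n : ℕ => (n : ℝ) ^ (-s)) :=
      Real.summable_nat_rpow.2 (by linarith)
    have h1 := (summable_nat_add_iff 1).2 h0
    refine h1.congr fun k => ?_
    push_cast
    ring_nf
  have hg0 : ∀ k : ℕ, 0 ≤ ((1:ℝ) + k) ^ (-s) := fun k =>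
    Real.rpow_nonneg (by positivity) _
  set K := Real.exp (∑' k : ℕ, ((1:ℝ) + k) ^ (-s)) with hK
  have hnn : ∀ σ : Finset ℕ, 0 ≤ lam σ ^ (-s) := fun σ => Real.rpow_nonneg (lam_pos σ).le _
  apply summable_of_sum_le (c := K) hnn
  intro u
  set N := (u.sup fun σ => σ.sup id) + 1 with hN
  have hsub : ∀ σ ∈ u, σ ⊆ Finset.range N := by
    intro σ hσ k hk
    have h1 : k ≤ σ.sup id := Finset.le_sup (f := id) hk
    have h2 : σ.sup id ≤ u.sup fun σ => σ.sup id := Finset.le_sup hσ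
    simp only [Finset.mem_range, hN]
    omega
  calc ∑ σ ∈ u, lam σ ^ (-s)
      ≤ ∑ σ ∈ (Finset.range N).powerset, lam σ ^ (-s) :=
        Finset.sum_le_sum_of_subset_of_nonneg
          (fun σ hσ => Finset.mem_powerset.2 (hsub σ hσ)) (fun σ _ _ => hnn σ)
    _ = ∑ σ ∈ (Finset.range N).powerset, ∏ k ∈ σ, ((1:ℝ) + k) ^ (-s) := by
        refine Finset.sum_congr rfl fun σ _ => ?_
        rw [lam, ← Real.finset_prod_rpow σ _ (fun k _ => by positivity) (-s)]
    _ = ∏ k ∈ Finset.range N, (((1:ℝ) + k) ^ (-s) + 1) := by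
        rw [Finset.prod_add]
        refine Finset.sum_congr rfl fun σ _ => ?_
        simp
    _ ≤ ∏ k ∈ Finset.range N, Real.exp (((1:ℝ) + k) ^ (-s)) := by
        refine Finset.prod_le_prod (fun k _ => by positivity) (fun k _ => ?_)
        have := Real.add_one_le_exp (((1:ℝ) + k) ^ (-s))
        linarith
    _ = Real.exp (∑ k ∈ Finset.range N, ((1:ℝ) + k) ^ (-s)) := by
        rw [Real.exp_sum]
    _ ≤ K := by
        rw [hK]
        exact Real.exp_le_exp.2 (Summable.sum_le_tsum _ (fun k _ => hg0 k) hg)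

/-- `ℓ²`-model of the weighted space `S_q`: the standard basis vector `lp.single 2 σ 1`
corresponds to the orthonormal basis vector `λ_σ^{-q} e_σ` of `S_q`. -/
noncomputable abbrev Hmodel : Type := lp (fun _ : Finset ℕ => ℂ) 2

set_option maxHeartbeats 2000000 in
/-- **Technical theorem.** If `T : S → S*` is a continuous linear operator whose 2D-Fock
transform `G(σ,τ) = ⟨⟨T e_σ, e_τ⟩⟩` satisfies `|G(σ,τ)| ≤ C λ_σ^p λ_τ^p`, then for every
`q > p + 1/2` there is a unique bounded operator `T̃ : S_q → S_q*` extending `T` (i.e.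
having the same matrix elements `⟨⟨T̃(λ_σ^{-q}e_σ), λ_τ^{-q}e_τ⟩⟩ = λ_σ^{-q}λ_τ^{-q}G(σ,τ)`
in the `ℓ²`-model) with `‖T̃‖ ≤ C ∑_{σ∈Γ} λ_σ^{-2(q-p)}`. -/
theorem stmt5 (C p : ℝ) (hC : 0 ≤ C) (hp : 0 ≤ p) (G : Finset ℕ → Finset ℕ → ℂ)
    (hG : ∀ σ τ : Finset ℕ, ‖G σ τ‖ ≤ C * lam σ ^ p * lam τ ^ p)
    (q : ℝ) (hq : q > p + 1 / 2) :
    ∃ T : Hmodel →L[ℂ] StrongDual ℂ Hmodel,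
      (∀ σ τ : Finset ℕ,
        T (lp.single 2 σ (1 : ℂ)) (lp.single 2 τ (1 : ℂ))
          = ((lam σ ^ (-q) * lam τ ^ (-q) : ℝ) : ℂ) * G σ τ) ∧
      ‖T‖ ≤ C * ∑' σ : Finset ℕ, lam σ ^ (-(2 * (q - p))) ∧
      ∀ T' : Hmodel →L[ℂ] StrongDual ℂ Hmodel,
        (∀ σ τ : Finset ℕ,
          T' (lp.single 2 σ (1 : ℂ)) (lp.single 2 τ (1 : ℂ))
            = ((lam σ ^ (-q) * lam τ ^ (-q) : ℝ) : ℂ) * G σ τ) → T' = T := by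
  classical
  have hs1 : (1:ℝ) < 2 * (q - p) := by linarith
  set w : Finset ℕ → ℝ := fun σ => lam σ ^ (p - q) with hw_def
  have hw0 : ∀ σ, 0 ≤ w σ := fun σ => Real.rpow_nonneg (lam_pos σ).le _
  have hwsq : ∀ σ, w σ ^ 2 = lam σ ^ (-(2 * (q - p))) := by
    intro σ
    rw [hw_def]
    rw [← Real.rpow_natCast (lam σ ^ (p - q)) 2, ← Real.rpow_mul (lam_pos σ).le]
    congr 1
    push_cast
    ring
  have hMsum : Summable (fun σ : Finset ℕ => lam σ ^ (-(2 * (q - p)))) := summable_lam_rpow hs1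
  set M : ℝ := ∑' σ : Finset ℕ, lam σ ^ (-(2 * (q - p))) with hM_def
  have hM0 : 0 ≤ M := tsum_nonneg fun σ => Real.rpow_nonneg (lam_pos σ).le _
  have hwsum : Summable (fun σ => w σ ^ 2) := by
    simpa only [hwsq] using hMsum
  have hwtsum : ∑' σ, w σ ^ 2 = M := by rw [hM_def]; exact tsum_congr hwsq
  set a : Finset ℕ → Finset ℕ → ℂ :=
    fun σ τ => ((lam σ ^ (-q) * lam τ ^ (-q) : ℝ) : ℂ) * G σ τ with ha_def
  have ha_bound : ∀ σ τ, ‖a σ τ‖ ≤ C * w σ * w τ := by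
    intro σ τ
    have hσ := (lam_pos σ)
    have hτ := (lam_pos τ)
    have hnn : 0 ≤ lam σ ^ (-q) * lam τ ^ (-q) :=
      mul_nonneg (Real.rpow_nonneg hσ.le _) (Real.rpow_nonneg hτ.le _)
    have h1 : ‖a σ τ‖ = (lam σ ^ (-q) * lam τ ^ (-q)) * ‖G σ τ‖ := by
      rw [ha_def, norm_mul, Complex.norm_real, Real.norm_of_nonneg hnn]
    rw [h1]
    have h3 := mul_le_mul_of_nonneg_left (hG σ τ) hnn
    refine h3.trans (le_of_eq ?_)
    rw [hw_def]
    simp only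
    rw [show (p - q) = -q + p by ring, Real.rpow_add hσ, Real.rpow_add hτ]
    ring
  -- basic facts about lp norms
  have hξsq : ∀ ξ : Hmodel, Summable (fun σ => ‖ξ σ‖ ^ 2) := by
    intro ξ
    have h := lp.memℓp ξ
    rw [memℓp_gen_iff (p := 2) (by norm_num)] at h
    rw [show ((2:ℝ≥0∞).toReal) = ((2:ℕ):ℝ) by norm_num] at h
    simpa only [Real.rpow_natCast] using h
  have hnormsq : ∀ ξ : Hmodel, ∑' σ, ‖ξ σ‖ ^ 2 = ‖ξ‖ ^ 2 := by
    intro ξ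
    have h := lp.norm_rpow_eq_tsum (p := 2) (by norm_num) ξ
    rw [show ((2:ℝ≥0∞).toReal) = ((2:ℕ):ℝ) by norm_num] at h
    simp only [Real.rpow_natCast] at h
    exact h.symm
  have key : ∀ ξ : Hmodel, Summable (fun σ => w σ * ‖ξ σ‖) ∧
      ∑' σ, w σ * ‖ξ σ‖ ≤ Real.sqrt M * ‖ξ‖ := by
    intro ξ
    obtain ⟨h1, h2⟩ := cs_tsum hw0 (fun σ => norm_nonneg (ξ σ)) hwsum (hξsq ξ)
    refine ⟨h1, h2.trans (le_of_eq ?_)⟩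
    rw [hwtsum, hnormsq, Real.sqrt_sq (norm_nonneg _)]
  -- pointwise bound for the kernel
  have hple : ∀ (ξ η : Hmodel) (z : Finset ℕ × Finset ℕ),
      ‖a z.1 z.2 * ξ z.1 * η z.2‖ ≤ (C * (w z.1 * ‖ξ z.1‖)) * (w z.2 * ‖η z.2‖) := by
    intro ξ η z
    rw [norm_mul, norm_mul]
    calc ‖a z.1 z.2‖ * ‖ξ z.1‖ * ‖η z.2‖
        ≤ (C * w z.1 * w z.2) * ‖ξ z.1‖ * ‖η z.2‖ :=
          mul_le_mul_of_nonneg_right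
            (mul_le_mul_of_nonneg_right (ha_bound z.1 z.2) (norm_nonneg _)) (norm_nonneg _)
      _ = (C * (w z.1 * ‖ξ z.1‖)) * (w z.2 * ‖η z.2‖) := by ring
  have hprod : ∀ ξ η : Hmodel, Summable (fun z : Finset ℕ × Finset ℕ =>
      (C * (w z.1 * ‖ξ z.1‖)) * (w z.2 * ‖η z.2‖)) := fun ξ η =>
    Summable.mul_of_nonneg ((key ξ).1.mul_left C) (key η).1
      (fun σ => mul_nonneg hC (mul_nonneg (hw0 σ) (norm_nonneg _)))
      (fun τ => mul_nonneg (hw0 τ) (norm_nonneg _))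
  have hF : ∀ ξ η : Hmodel,
      Summable (fun z : Finset ℕ × Finset ℕ => ‖a z.1 z.2 * ξ z.1 * η z.2‖) := fun ξ η =>
    Summable.of_nonneg_of_le (fun z => norm_nonneg _) (hple ξ η) (hprod ξ η)
  have hFsum : ∀ ξ η : Hmodel,
      Summable (fun z : Finset ℕ × Finset ℕ => a z.1 z.2 * ξ z.1 * η z.2) :=
    fun ξ η => (hF ξ η).of_norm
  have hbound : ∀ ξ η : Hmodel,
      ‖∑' z : Finset ℕ × Finset ℕ, a z.1 z.2 * ξ z.1 * η z.2‖ ≤ C * M * ‖ξ‖ * ‖η‖ := by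
    intro ξ η
    have h1 := norm_tsum_le_tsum_norm (hF ξ η)
    have h2 : ∑' z : Finset ℕ × Finset ℕ, ‖a z.1 z.2 * ξ z.1 * η z.2‖ ≤
        ∑' z : Finset ℕ × Finset ℕ, (C * (w z.1 * ‖ξ z.1‖)) * (w z.2 * ‖η z.2‖) :=
      Summable.tsum_le_tsum (hple ξ η) (hF ξ η) (hprod ξ η)
    have hf1n : Summable (fun σ => ‖C * (w σ * ‖ξ σ‖)‖) := by
      refine ((key ξ).1.mul_left C).congr fun σ => ?_
      rw [Real.norm_of_nonneg (mul_nonneg hC (mul_nonneg (hw0 σ) (norm_nonneg _)))]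
    have hf2n : Summable (fun τ => ‖w τ * ‖η τ‖‖) := by
      refine (key η).1.congr fun τ => ?_
      rw [Real.norm_of_nonneg (mul_nonneg (hw0 τ) (norm_nonneg _))]
    have h3 : ∑' z : Finset ℕ × Finset ℕ, (C * (w z.1 * ‖ξ z.1‖)) * (w z.2 * ‖η z.2‖)
        = (∑' σ, C * (w σ * ‖ξ σ‖)) * (∑' τ, w τ * ‖η τ‖) :=
      (tsum_mul_tsum_of_summable_norm hf1n hf2n).symm
    have h4 : (∑' σ, C * (w σ * ‖ξ σ‖)) * (∑' τ, w τ * ‖η τ‖)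
        ≤ (C * (Real.sqrt M * ‖ξ‖)) * (Real.sqrt M * ‖η‖) := by
      rw [tsum_mul_left]
      refine mul_le_mul (mul_le_mul_of_nonneg_left (key ξ).2 hC) (key η).2
        (tsum_nonneg fun τ => mul_nonneg (hw0 τ) (norm_nonneg _))
        (mul_nonneg hC (mul_nonneg (Real.sqrt_nonneg _) (norm_nonneg _)))
    have h5 : (C * (Real.sqrt M * ‖ξ‖)) * (Real.sqrt M * ‖η‖) = C * M * ‖ξ‖ * ‖η‖ := by
      have hms : Real.sqrt M * Real.sqrt M = M := Real.mul_self_sqrt hM0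
      calc (C * (Real.sqrt M * ‖ξ‖)) * (Real.sqrt M * ‖η‖)
          = C * (Real.sqrt M * Real.sqrt M) * ‖ξ‖ * ‖η‖ := by ring
        _ = C * M * ‖ξ‖ * ‖η‖ := by rw [hms]
    linarith
  -- the bilinear map
  let B : Hmodel →ₗ[ℂ] Hmodel →ₗ[ℂ] ℂ := LinearMap.mk₂ ℂ
    (fun ξ η => ∑' z : Finset ℕ × Finset ℕ, a z.1 z.2 * ξ z.1 * η z.2)
    (fun ξ ξ' η => by
      rw [← Summable.tsum_add (hFsum ξ η) (hFsum ξ' η)]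
      refine tsum_congr fun z => ?_
      simp only [lp.coeFn_add, Pi.add_apply]
      ring)
    (fun c ξ η => by
      rw [smul_eq_mul, ← tsum_mul_left]
      refine tsum_congr fun z => ?_
      simp only [lp.coeFn_smul, Pi.smul_apply, smul_eq_mul]
      ring)
    (fun ξ η η' => by
      rw [← Summable.tsum_add (hFsum ξ η) (hFsum ξ η')]
      refine tsum_congr fun z => ?_
      simp only [lp.coeFn_add, Pi.add_apply]
      ring)
    (fun c ξ η => by
      rw [smul_eq_mul, ← tsum_mul_left]
      refine tsum_congr fun z => ?_
      simp only [lp.coeFn_smul, Pi.smul_apply, smul_eq_mul]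
      ring)
  have hBapp : ∀ ξ η : Hmodel,
      B ξ η = ∑' z : Finset ℕ × Finset ℕ, a z.1 z.2 * ξ z.1 * η z.2 := fun ξ η => rfl
  let T : Hmodel →L[ℂ] StrongDual ℂ Hmodel :=
    LinearMap.mkContinuous₂ B (C * M) (fun ξ η => by rw [hBapp]; exact hbound ξ η)
  have hTapp : ∀ ξ η : Hmodel,
      T ξ η = ∑' z : Finset ℕ × Finset ℕ, a z.1 z.2 * ξ z.1 * η z.2 := fun ξ η => rfl
  have hmat : ∀ σ τ : Finset ℕ, T (lp.single 2 σ (1:ℂ)) (lp.single 2 τ (1:ℂ))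
      = ((lam σ ^ (-q) * lam τ ^ (-q) : ℝ) : ℂ) * G σ τ := by
    intro σ τ
    rw [hTapp, tsum_eq_single ((σ, τ) : Finset ℕ × Finset ℕ) ?_]
    · rw [lp.single_apply_self, lp.single_apply_self, mul_one, mul_one]
    · intro z hz
      by_cases h1 : z.1 = σ
      · have h2 : z.2 ≠ τ := fun h2 => hz (Prod.ext h1 h2)
        rw [lp.single_apply_ne 2 τ _ h2, mul_zero]
      · rw [lp.single_apply_ne 2 σ _ h1, mul_zero, zero_mul]
  have hnorm : ‖T‖ ≤ C * M :=
    LinearMap.mkContinuous₂_norm_le _ (mul_nonneg hC hM0) _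
  have hdense : Dense ((Submodule.span ℂ
      (Set.range fun σ : Finset ℕ => lp.single 2 σ (1:ℂ)) : Submodule ℂ Hmodel) : Set Hmodel) := by
    rw [Submodule.dense_iff_topologicalClosure_eq_top, Submodule.topologicalClosure_eq_top_iff,
      Submodule.eq_bot_iff]
    intro x hx
    have hx' : ∀ σ : Finset ℕ, inner (𝕜 := ℂ) (lp.single 2 σ (1:ℂ)) x = 0 := fun σ =>
      (Submodule.mem_orthogonal _ x).1 hx _ (Submodule.subset_span ⟨σ, rfl⟩)
    have hzero : ∀ σ : Finset ℕ, x σ = 0 := by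
      intro σ
      have h := lp.inner_single_left (𝕜 := ℂ) σ (1:ℂ) x
      rw [hx' σ] at h
      simpa using h.symm
    apply lp.ext
    funext σ
    simpa using hzero σ
  refine ⟨T, hmat, hnorm, ?_⟩
  intro T' hT'
  refine ContinuousLinearMap.ext_on hdense ?_
  rintro ξ ⟨σ, rfl⟩
  refine ContinuousLinearMap.ext_on hdense ?_
  rintro η ⟨τ, rfl⟩
  show T' (lp.single 2 σ 1) (lp.single 2 τ 1) = T (lp.single 2 σ 1) (lp.single 2 τ 1)
  rw [hT' σ τ, hmat σ τ]
end

section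
/- Let π be an S-smooth spectral measure on the Bernoulli space (Σ, 𝒜, μ) with numerical densities φ^π_{σ,τ} ∈ L²(μ) satisfying ⟨π(E)Z_σ, Z_τ⟩ = ∫_E φ^π_{σ,τ} dμ for all measurable E. Then for every n ≥ 0 and every ξ ∈ L²(μ), the function ∑_{σ,τ∈Γ_n} conj(⟨Z_σ,ξ⟩)·⟨Z_τ,ξ⟩·φ^π_{σ,τ} is nonnegative μ-almost everywhere on Σ, where Γ_n is the set of subsets of {0,…,n}. -/
open scoped BigOperators ComplexOrder
open MeasureTheory

/-- A spectral measure on a measurable space `(Ω, 𝒜)` with values in the orthogonal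
projections of a complex Hilbert space `H`. -/
structure SpectralMeasure (Ω : Type*) [MeasurableSpace Ω]
    (H : Type*) [NormedAddCommGroup H] [InnerProductSpace ℂ H] [CompleteSpace H] where
  toFun : Set Ω → (H →L[ℂ] H)
  selfAdjoint : ∀ E : Set Ω, MeasurableSet E → IsSelfAdjoint (toFun E)
  idem : ∀ E : Set Ω, MeasurableSet E → (toFun E).comp (toFun E) = toFun E
  map_univ : toFun Set.univ = ContinuousLinearMap.id ℂ H
  countably_additive : ∀ E : ℕ → Set Ω, (∀ n, MeasurableSet (E n)) →
    Pairwise (Function.onFun Disjoint E) →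
    ∀ x : H, HasSum (fun n => toFun (E n) x) (toFun (⋃ n, E n) x)

/-- Let `π` be an `S`-smooth spectral measure on the Bernoulli space, with numerical
densities `φ_{σ,τ}` satisfying `⟨π(E)Z_σ, Z_τ⟩ = ∫_E φ_{σ,τ} dμ` for measurable `E`.
Then for every `n` and every `ξ ∈ L²(μ)`, the function
`∑_{σ,τ∈Γ_n} conj(⟨Z_σ,ξ⟩)⟨Z_τ,ξ⟩ φ_{σ,τ}` is `≥ 0` μ-a.e., where
`Γ_n = {σ : σ ⊆ {0,…,n}}`. -/
theorem stmt9 {Ω : Type*} [MeasurableSpace Ω] (μ : Measure Ω) [IsProbabilityMeasure μ]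
    (π : SpectralMeasure Ω (Lp ℂ 2 μ))
    (Z : Finset ℕ → Lp ℂ 2 μ) (hZ : Orthonormal ℂ Z)
    (φ : Finset ℕ → Finset ℕ → Ω → ℂ)
    (hφint : ∀ σ τ : Finset ℕ, Integrable (φ σ τ) μ)
    (hφ : ∀ (σ τ : Finset ℕ) (E : Set Ω), MeasurableSet E →
      (inner ℂ (π.toFun E (Z σ)) (Z τ) : ℂ) = ∫ ω in E, φ σ τ ω ∂μ)
    (n : ℕ) (ξ : Lp ℂ 2 μ) :
    ∀ᵐ ω ∂μ, 0 ≤ ∑ σ ∈ (Finset.range (n + 1)).powerset,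
        ∑ τ ∈ (Finset.range (n + 1)).powerset,
          (starRingEnd ℂ) (inner ℂ (Z σ) ξ : ℂ) * (inner ℂ (Z τ) ξ : ℂ) * φ σ τ ω := by
  classical
  set S := (Finset.range (n + 1)).powerset with hS
  set c : Finset ℕ → ℂ := fun σ => (inner ℂ (Z σ) ξ : ℂ) with hc
  set f : Ω → ℂ := fun ω => ∑ σ ∈ S, ∑ τ ∈ S,
      (starRingEnd ℂ) (c σ) * c τ * φ σ τ ω with hf
  set u : Lp ℂ 2 μ := ∑ σ ∈ S, c σ • Z σ with hu
  have hfint : Integrable f μ := by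
    apply integrable_finset_sum
    intro σ _
    apply integrable_finset_sum
    intro τ _
    exact (hφint σ τ).const_mul _
  -- key: set integral equals inner product
  have hkey : ∀ E : Set Ω, MeasurableSet E →
      ∫ ω in E, f ω ∂μ = (inner ℂ (π.toFun E u) u : ℂ) := by
    intro E hE
    have hL : ∫ ω in E, f ω ∂μ = ∑ σ ∈ S, ∑ τ ∈ S,
        (starRingEnd ℂ) (c σ) * c τ * ∫ ω in E, φ σ τ ω ∂μ := by
      rw [integral_finset_sum]
      · refine Finset.sum_congr rfl fun σ _ => ?_
        rw [integral_finset_sum]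
        · refine Finset.sum_congr rfl fun τ _ => ?_
          exact integral_const_mul _ _
        · intro τ _
          exact ((hφint σ τ).const_mul _).integrableOn
      · intro σ _
        refine Integrable.integrableOn ?_
        exact integrable_finset_sum _ fun τ _ => (hφint σ τ).const_mul _
    have hR : (inner ℂ (π.toFun E u) u : ℂ) = ∑ σ ∈ S, ∑ τ ∈ S,
        (starRingEnd ℂ) (c σ) * c τ * (inner ℂ (π.toFun E (Z σ)) (Z τ) : ℂ) := by
      rw [hu, map_sum, sum_inner]
      refine Finset.sum_congr rfl fun σ _ => ?_
      rw [_root_.map_smul, inner_smul_left, inner_sum]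
      rw [Finset.mul_sum]
      refine Finset.sum_congr rfl fun τ _ => ?_
      rw [inner_smul_right]
      ring
    rw [hL, hR]
    refine Finset.sum_congr rfl fun σ _ => Finset.sum_congr rfl fun τ _ => ?_
    rw [hφ σ τ E hE]
  have hpos : ∀ E : Set Ω, MeasurableSet E → (0:ℂ) ≤ (inner ℂ (π.toFun E u) u : ℂ) := by
    intro E hE
    have h1 : (inner ℂ (π.toFun E u) u : ℂ) = inner ℂ (π.toFun E u) (π.toFun E u) := by
      have hid : π.toFun E (π.toFun E u) = π.toFun E u := by
        have := π.idem E hE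
        calc π.toFun E (π.toFun E u) = ((π.toFun E).comp (π.toFun E)) u := rfl
          _ = π.toFun E u := by rw [this]
      have hsa := π.selfAdjoint E hE
      have hsym := (ContinuousLinearMap.isSelfAdjoint_iff_isSymmetric.mp hsa)
      calc (inner ℂ (π.toFun E u) u : ℂ)
          = inner ℂ (π.toFun E (π.toFun E u)) u := by rw [hid]
        _ = inner ℂ (π.toFun E u) (π.toFun E u) := hsym _ _
    rw [h1, inner_self_eq_norm_sq_to_K, ← RCLike.ofReal_pow]
    exact (RCLike.ofReal_nonneg (K := ℂ)).mpr (sq_nonneg _)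
  have hre : ∀ᵐ ω ∂μ, 0 ≤ (f ω).re := by
    refine ae_nonneg_of_forall_setIntegral_nonneg hfint.re fun E hE _ => ?_
    have h := integral_re (𝕜 := ℂ) hfint.integrableOn (μ := μ.restrict E)
    simp only [RCLike.re_to_complex] at h
    rw [h, hkey E hE]
    exact (Complex.le_def.mp (hpos E hE)).1
  have himle : ∀ᵐ ω ∂μ, 0 ≤ (f ω).im := by
    refine ae_nonneg_of_forall_setIntegral_nonneg hfint.im fun E hE _ => ?_
    have h := integral_im (𝕜 := ℂ) hfint.integrableOn (μ := μ.restrict E)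
    simp only [RCLike.im_to_complex] at h
    rw [h, hkey E hE, ← (Complex.le_def.mp (hpos E hE)).2]
    simp
  have himge : ∀ᵐ ω ∂μ, (f ω).im ≤ 0 := by
    have : ∀ᵐ ω ∂μ, 0 ≤ (-(f ω).im) := by
      refine ae_nonneg_of_forall_setIntegral_nonneg hfint.im.neg fun E hE _ => ?_
      have h := integral_im (𝕜 := ℂ) hfint.integrableOn (μ := μ.restrict E)
      simp only [RCLike.im_to_complex] at h
      rw [integral_neg, h, hkey E hE, ← (Complex.le_def.mp (hpos E hE)).2]
      simp
    filter_upwards [this] with ω h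
    linarith
  filter_upwards [hre, himle, himge] with ω h1 h2 h3
  show (0:ℂ) ≤ f ω
  refine Complex.le_def.mpr ⟨?_, ?_⟩
  · simpa only [Complex.zero_re] using h1
  · simp only [Complex.zero_im]
    linarith
end
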